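/- arXiv:1511.08938 — 6 statements merged into one kernel-verified Lean document; each statement's English description precedes it below -/
import Mathlib

section
/- Let d, d1, d2 be integers with 2 ≤ d1 < d/2 and d2 = d - 1 - d1, and let f(x,y,z) = x^d + x^{d1} y^{d2+1} + y^{d-1} z in ℂ[x,y,z]. Then y^{d1}·f_y − ((d2+1)·x^{d1} + (d−1)·y^{d1−1}·z)·f_z = 0, where f_y, f_z denote the partial derivatives of f. -/
open MvPolynomial

theorem stmt_0 (d d1 d2 : ℕ) (h1 : 2 ≤ d1) (h2 : 2 * d1 < d) (h3 : d2 = d - 1 - d1)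
    (f : MvPolynomial (Fin 3) ℂ)
    (hf : f = X 0 ^ d + X 0 ^ d1 * X 1 ^ (d2 + 1) + X 1 ^ (d - 1) * X 2) :
    X 1 ^ d1 * pderiv 1 f
      - (C ((d2 : ℂ) + 1) * X 0 ^ d1 + C ((d : ℂ) - 1) * X 1 ^ (d1 - 1) * X 2) * pderiv 2 f
      = 0 := by
  obtain ⟨m, rfl⟩ : ∃ m, d1 = m + 2 := ⟨d1 - 2, by omega⟩
  obtain ⟨k, rfl⟩ : ∃ k, d2 = k + 2 := ⟨d2 - 2, by omega⟩
  obtain rfl : d = m + k + 5 := by omega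
  subst hf
  simp only [map_add, pderiv_mul, pderiv_pow, pderiv_X, Derivation.leibniz_pow]
  norm_num [Pi.single_apply, Fin.ext_iff]
  ring_nf
  simp only [map_ofNat]
  ring
end

section
/- Let d ≥ 4, k ≥ 2 an integer with 2k < d, d1 = k + 1, and f = x^d + x^{d−k}·y^{k} + y^{d−1}·z ∈ ℂ[x,y,z] (so f = x^d + x^{d2+1} y^{d1−1} + y^{d−1} z with d2 = d − d1). Then k·x·y^{k}·f_x − (d·x^k·y + (d−k)·y^{k+1})·f_y + (d(d−1)·x^k·z + (d−1)(d−k)·y^k·z)·f_z = 0. -/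
open MvPolynomial

theorem stmt_3 (d k : ℕ) (hd : 4 ≤ d) (hk : 2 ≤ k) (hkd : 2 * k < d)
    (f : MvPolynomial (Fin 3) ℂ)
    (hf : f = X 0 ^ d + X 0 ^ (d - k) * X 1 ^ k + X 1 ^ (d - 1) * X 2) :
    C (k : ℂ) * X 0 * X 1 ^ k * pderiv 0 f
      - (C (d : ℂ) * X 0 ^ k * X 1 + C ((d : ℂ) - k) * X 1 ^ (k + 1)) * pderiv 1 f
      + (C ((d : ℂ) * ((d : ℂ) - 1)) * X 0 ^ k * X 2
          + C (((d : ℂ) - 1) * ((d : ℂ) - k)) * X 1 ^ k * X 2) * pderiv 2 f = 0 := by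
  obtain ⟨a, rfl⟩ : ∃ a, k = a + 2 := ⟨k - 2, by omega⟩
  obtain ⟨e, rfl⟩ : ∃ e, d = 2 * (a + 2) + 1 + e := ⟨d - (2 * (a + 2) + 1), by omega⟩
  subst hf
  simp only [pderiv_X, map_add, pderiv_mul, pderiv_pow, map_ofNat, Pi.single_eq_same,
    Pi.single_eq_of_ne (by decide : (0 : Fin 3) ≠ 1), Pi.single_eq_of_ne (by decide : (1 : Fin 3) ≠ 0),
    Pi.single_eq_of_ne (by decide : (2 : Fin 3) ≠ 0), Pi.single_eq_of_ne (by decide : (0 : Fin 3) ≠ 2),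
    Pi.single_eq_of_ne (by decide : (1 : Fin 3) ≠ 2), Pi.single_eq_of_ne (by decide : (2 : Fin 3) ≠ 1)]
  simp only [show 2 * (a + 2) + 1 + e = a + a + 5 + e by omega,
    show a + a + 5 + e - (a + 2) = a + 3 + e by omega,
    show a + a + 5 + e - 1 = a + a + 4 + e by omega,
    show a + a + 4 + e - 1 = a + a + 3 + e by omega,
    show a + 3 + e - 1 = a + 2 + e by omega,
    show a + 2 - 1 = a + 1 by omega]
  simp only [pow_add]
  push_cast
  simp only [map_add, map_sub, map_mul, map_natCast, map_ofNat, map_one]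
  ring
end

section
/- Let d ≥ 5 and k an integer with 1 ≤ k and 2k + 1 < d; set f = x^d + x^{d−k} y^{k} + y^{d−1} z ∈ ℂ[x,y,z]. Then −k·y^{d−k−1}·f_x + d·x^{k−1}·y^{d−2k}·f_y + (k(d−k)·x^{d−k−1} − d(d−1)·x^{k−1}·y^{d−2k−1}·z)·f_z = 0. -/
open MvPolynomial

theorem stmt_4 (d k : ℕ) (hd : 5 ≤ d) (hk : 1 ≤ k) (hkd : 2 * k + 1 < d)
    (f : MvPolynomial (Fin 3) ℂ)
    (hf : f = X 0 ^ d + X 0 ^ (d - k) * X 1 ^ k + X 1 ^ (d - 1) * X 2) :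
    -(C (k : ℂ) * X 1 ^ (d - k - 1)) * pderiv 0 f
      + C (d : ℂ) * X 0 ^ (k - 1) * X 1 ^ (d - 2 * k) * pderiv 1 f
      + (C ((k : ℂ) * ((d : ℂ) - k)) * X 0 ^ (d - k - 1)
          - C ((d : ℂ) * ((d : ℂ) - 1)) * X 0 ^ (k - 1) * X 1 ^ (d - 2 * k - 1) * X 2)
        * pderiv 2 f = 0 := by
  obtain ⟨j, rfl⟩ : ∃ j, k = j + 1 := ⟨k - 1, by omega⟩
  obtain ⟨m, rfl⟩ : ∃ m, d = 2 * (j + 1) + 2 + m := ⟨d - (2 * (j + 1) + 2), by omega⟩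
  subst hf
  simp only [map_add, pderiv_pow, pderiv_mul, pderiv_X_self,
    pderiv_X_of_ne (by decide : (0:Fin 3) ≠ 1), pderiv_X_of_ne (by decide : (1:Fin 3) ≠ 0),
    pderiv_X_of_ne (by decide : (2:Fin 3) ≠ 0), pderiv_X_of_ne (by decide : (2:Fin 3) ≠ 1),
    pderiv_X_of_ne (by decide : (0:Fin 3) ≠ 2), pderiv_X_of_ne (by decide : (1:Fin 3) ≠ 2),
    mul_zero, zero_mul, mul_one, add_zero, zero_add, smul_eq_mul]
  push_cast
  have h1 : 2 * (j + 1) + 2 + m - (j + 1) = j + 2 + m + 1 := by omega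
  have h2 : 2 * (j + 1) + 2 + m - 1 = 2 * j + 3 + m := by omega
  have h3 : 2 * (j + 1) + 2 + m - 2 * (j + 1) = m + 2 := by omega
  have h4 : 2 * (j + 1) + 2 + m - (j + 1) - 1 = j + 2 + m := by omega
  have h5 : 2 * (j + 1) + 2 + m - 2 * (j + 1) - 1 = m + 1 := by omega
  have h6 : 2 * (j + 1) + 2 + m - 1 - 1 = 2 * j + 2 + m := by omega
  have h7 : 2 * j + 3 + m - 1 = 2 * j + 2 + m := by omega
  simp only [h1, h2, h3, h4, h5, h6, h7, map_sub, map_add, map_mul, map_one, map_pow, map_natCast, map_ofNat]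
  push_cast
  ring
end

section
/- Let d and k be integers with 2 ≤ k+1 and 2(k+1) ≤ d, 2k+2 < d, and set q = (d−k)k/(d(d−1)), f = x^d + x^{d−k} y^k + y^{d−1} z ∈ ℂ[x,y,z]. Define a = y^{k−1}(q x^{d−2k} + y^{d−2k−1} z), b = −(q d x^{d−k−1} + q(d−k) x^{d−2k−1} y^k + d x^{k−1} y^{d−2k−1} z)/k, c = (d−1)(q(d−k) x^{d−2k−1} y^{k−1} z + d x^{k−1} y^{d−2k−2} z^2)/k. Then a·f_x + b·f_y + c·f_z = 0. -/
open MvPolynomial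
set_option maxHeartbeats 2000000 in

theorem stmt_5 (d k : ℕ) (hk : 2 ≤ k + 1) (hkd : 2 * (k + 1) ≤ d) (hkd' : 2 * k + 2 < d)
    (q : ℂ) (hq : q = (((d : ℂ) - k) * k) / ((d : ℂ) * ((d : ℂ) - 1)))
    (f a b c : MvPolynomial (Fin 3) ℂ)
    (hf : f = X 0 ^ d + X 0 ^ (d - k) * X 1 ^ k + X 1 ^ (d - 1) * X 2)
    (ha : a = X 1 ^ (k - 1) * (C q * X 0 ^ (d - 2 * k) + X 1 ^ (d - 2 * k - 1) * X 2))
    (hb : b = -(C ((q * d) / k) * X 0 ^ (d - k - 1)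
        + C ((q * ((d : ℂ) - k)) / k) * X 0 ^ (d - 2 * k - 1) * X 1 ^ k
        + C ((d : ℂ) / k) * X 0 ^ (k - 1) * X 1 ^ (d - 2 * k - 1) * X 2))
    (hc : c = C (((d : ℂ) - 1) * ((q * ((d : ℂ) - k)) / k)) * X 0 ^ (d - 2 * k - 1) * X 1 ^ (k - 1) * X 2
        + C (((d : ℂ) - 1) * ((d : ℂ) / k)) * X 0 ^ (k - 1) * X 1 ^ (d - 2 * k - 2) * X 2 ^ 2) :
    a * pderiv 0 f + b * pderiv 1 f + c * pderiv 2 f = 0 := by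
  obtain ⟨m, rfl⟩ : ∃ m, k = m + 1 := ⟨k - 1, by omega⟩
  obtain ⟨n, rfl⟩ : ∃ n, d = 2 * m + 5 + n := ⟨d - (2 * m + 5), by omega⟩
  subst hq hf ha hb hc
  apply MvPolynomial.funext
  intro x
  have hd1 : ((2*m+5+n : ℕ) : ℂ) - 1 = ((2*m+4+n : ℕ) : ℂ) := by push_cast; ring
  have hK : ((m:ℂ) + 1) ≠ 0 := by
    have : (((m+1 : ℕ)) : ℂ) ≠ 0 := Nat.cast_ne_zero.2 (by omega)
    push_cast at this; simpa using this
  have hD : ((2*(m:ℂ) + 5 + n)) ≠ 0 := by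
    have : (((2*m+5+n : ℕ)) : ℂ) ≠ 0 := Nat.cast_ne_zero.2 (by omega)
    push_cast at this; simpa using this
  have hD1 : ((2*(m:ℂ) + 4 + n)) ≠ 0 := by
    have : (((2*m+4+n : ℕ)) : ℂ) ≠ 0 := Nat.cast_ne_zero.2 (by omega)
    push_cast at this; simpa using this
  have hD1' : 2*(m:ℂ) + 5 + (n:ℂ) - 1 ≠ 0 := by
    rw [show 2*(m:ℂ) + 5 + (n:ℂ) - 1 = 2*(m:ℂ) + 4 + n from by ring]; exact hD1
  simp only [map_add, map_mul, map_neg, pderiv_pow, pderiv_mul, pderiv_X_self, pderiv_C,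
    pderiv_X_of_ne (show (0:Fin 3) ≠ 1 by decide), pderiv_X_of_ne (show (1:Fin 3) ≠ 0 by decide),
    pderiv_X_of_ne (show (2:Fin 3) ≠ 0 by decide), pderiv_X_of_ne (show (2:Fin 3) ≠ 1 by decide),
    pderiv_X_of_ne (show (0:Fin 3) ≠ 2 by decide), pderiv_X_of_ne (show (1:Fin 3) ≠ 2 by decide),
    eval_add, eval_mul, eval_pow, eval_X, eval_C, eval_neg, map_zero, mul_zero, zero_mul, add_zero,
    zero_add, mul_one, map_natCast]
  set x0 := x 0; set x1 := x 1; set x2 := x 2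
  have e1 : 2*m+5+n - (m+1) = m + 4 + n := by omega
  have e2 : 2*m+5+n - 1 = 2*m+4+n := by omega
  have e3 : 2*m+5+n - 2*(m+1) = 3 + n := by omega
  have e4 : 2*m+5+n - 2*(m+1) - 1 = 2 + n := by omega
  have e5 : 2*m+5+n - (m+1) - 1 = m + 3 + n := by omega
  have e6 : 2*m+5+n - 2*(m+1) - 2 = 1 + n := by omega
  have e7 : m + 1 - 1 = m := by omega
  simp only [e1, e2, e3, e4, e5, e6, e7, show 3+n-1 = 2+n from by omega,
    show 3+n-2 = 1+n from by omega, show m+4+n-1 = m+3+n from by omega,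
    show 2*m+4+n-1 = 2*m+3+n from by omega]
  push_cast
  have hv : ((m:ℂ)+1) * ((m:ℂ)+1)⁻¹ = 1 := mul_inv_cancel₀ hK
  have hw : ((2*(m:ℂ)+5+(n:ℂ)) * (2*(m:ℂ)+5+(n:ℂ)-1)) * ((2*(m:ℂ)+5+(n:ℂ)) * (2*(m:ℂ)+5+(n:ℂ)-1))⁻¹ = 1 :=
    mul_inv_cancel₀ (mul_ne_zero hD hD1')
  set M := (m:ℂ)
  set N := (n:ℂ)
  linear_combination
    (-( (M+4+N) * (M+1) * ((2*M+5+N) * (2*M+5+N-1))⁻¹ * (2*M+5+N) * (x0^(3+n)*x0^(2*m+4+n)*x1^m)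
      + (M+4+N)^2 * (M+1) * ((2*M+5+N) * (2*M+5+N-1))⁻¹ * (x0^(m+3+n)*x0^(3+n)*x1^(m+1)*x1^m)
      + (2*M+5+N) * (x0^(2*m+4+n)*x1^m*x1^(2+n)*x2)
      + (M+4+N) * (2*M+5+N) * (2*M+4+N) * ((2*M+5+N) * (2*M+5+N-1))⁻¹ * (x0^(m+3+n)*x1^(2*m+3+n)*x2))) * hv
    + (-(M+4+N) * (x0^(m+3+n)*x1^(2*m+3+n)*x2)) * hw
end

section
/- Let k ≥ 1 and f = x^{2k} + x^k y^k + y^{2k−1} z ∈ ℂ[x,y,z]. Then there exist two ℂ[x,y,z]-linearly independent syzygies a·f_x + b·f_y + c·f_z = 0 with a, b, c homogeneous of degree k. -/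
open MvPolynomial
set_option maxHeartbeats 1000000

private lemma homXpow (i : Fin 3) (n : ℕ) :
    ((X i : MvPolynomial (Fin 3) ℂ) ^ n).IsHomogeneous n := by
  simpa using (isHomogeneous_X ℂ i).pow n

private lemma homCmul (r : ℂ) {p : MvPolynomial (Fin 3) ℂ} {n : ℕ} (hp : p.IsHomogeneous n) :
    (C r * p).IsHomogeneous n := by
  simpa using (isHomogeneous_C (Fin 3) r).mul hp

theorem stmt_6 (k : ℕ) (hk : 1 ≤ k) (f : MvPolynomial (Fin 3) ℂ)
    (hf : f = X 0 ^ (2 * k) + X 0 ^ k * X 1 ^ k + X 1 ^ (2 * k - 1) * X 2) :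
    ∃ a b c a' b' c' : MvPolynomial (Fin 3) ℂ,
      a.IsHomogeneous k ∧ b.IsHomogeneous k ∧ c.IsHomogeneous k ∧
      a'.IsHomogeneous k ∧ b'.IsHomogeneous k ∧ c'.IsHomogeneous k ∧
      a * pderiv 0 f + b * pderiv 1 f + c * pderiv 2 f = 0 ∧
      a' * pderiv 0 f + b' * pderiv 1 f + c' * pderiv 2 f = 0 ∧
      LinearIndependent ℂ
        ![((a, b, c) : MvPolynomial (Fin 3) ℂ × MvPolynomial (Fin 3) ℂ × MvPolynomial (Fin 3) ℂ),
          (a', b', c')] := by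
  obtain ⟨m, rfl⟩ : ∃ m, k = m + 1 := ⟨k - 1, by omega⟩
  subst hf
  refine ⟨0, X 1 ^ (m + 1),
      C (-((m : ℂ) + 1)) * X 0 ^ (m + 1) + C (-(2 * (m : ℂ) + 1)) * (X 1 ^ m * X 2),
      X 1 ^ (m + 1), C (-2 : ℂ) * (X 0 ^ m * X 1),
      C (-((m : ℂ) + 1)) * (X 0 ^ m * X 1) + C (2 * (2 * (m : ℂ) + 1)) * (X 0 ^ m * X 2),
      ?_, ?_, ?_, ?_, ?_, ?_, ?_, ?_, ?_⟩
  · exact isHomogeneous_zero _ _ _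
  · exact homXpow 1 (m + 1)
  · exact (homCmul _ (homXpow 0 (m + 1))).add
      (homCmul _ ((homXpow 1 m).mul (isHomogeneous_X ℂ 2)))
  · exact homXpow 1 (m + 1)
  · exact homCmul _ ((homXpow 0 m).mul (isHomogeneous_X ℂ 1))
  · exact (homCmul _ ((homXpow 0 m).mul (isHomogeneous_X ℂ 1))).add
      (homCmul _ ((homXpow 0 m).mul (isHomogeneous_X ℂ 2)))
  · have e1 : 2 * (m + 1) - 1 = 2 * m + 1 := by omega
    have e2 : m + 1 - 1 = m := by omega
    have e3 : 2 * m + 1 - 1 = 2 * m := by omega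
    simp only [map_add, pderiv_mul, pderiv_pow, pderiv_X_self,
      pderiv_X_of_ne (by decide : (0 : Fin 3) ≠ 1), pderiv_X_of_ne (by decide : (0 : Fin 3) ≠ 2),
      pderiv_X_of_ne (by decide : (1 : Fin 3) ≠ 0), pderiv_X_of_ne (by decide : (1 : Fin 3) ≠ 2),
      pderiv_X_of_ne (by decide : (2 : Fin 3) ≠ 0), pderiv_X_of_ne (by decide : (2 : Fin 3) ≠ 1),
      e1, e2, e3, ← C_eq_coe_nat]
    simp only [map_add, map_mul, map_neg, map_one, map_natCast, map_ofNat]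
    push_cast
    ring
  · have e1 : 2 * (m + 1) - 1 = 2 * m + 1 := by omega
    have e2 : m + 1 - 1 = m := by omega
    have e3 : 2 * m + 1 - 1 = 2 * m := by omega
    simp only [map_add, pderiv_mul, pderiv_pow, pderiv_X_self,
      pderiv_X_of_ne (by decide : (0 : Fin 3) ≠ 1), pderiv_X_of_ne (by decide : (0 : Fin 3) ≠ 2),
      pderiv_X_of_ne (by decide : (1 : Fin 3) ≠ 0), pderiv_X_of_ne (by decide : (1 : Fin 3) ≠ 2),
      pderiv_X_of_ne (by decide : (2 : Fin 3) ≠ 0), pderiv_X_of_ne (by decide : (2 : Fin 3) ≠ 1),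
      e1, e2, e3, ← C_eq_coe_nat]
    simp only [map_add, map_mul, map_neg, map_one, map_natCast, map_ofNat]
    push_cast
    ring
  · rw [linearIndependent_fin2]
    have hX : (X 1 : MvPolynomial (Fin 3) ℂ) ^ (m + 1) ≠ 0 :=
      pow_ne_zero _ (X_ne_zero 1)
    simp only [Matrix.cons_val_one, Matrix.head_cons, Matrix.cons_val_zero]
    refine ⟨fun h => hX (congrArg Prod.fst h), fun s h => ?_⟩
    have h1 : s • (X 1 : MvPolynomial (Fin 3) ℂ) ^ (m + 1) = 0 := congrArg Prod.fst h
    have h2 : s • (C (-2 : ℂ) * (X 0 ^ m * X 1)) = (X 1 : MvPolynomial (Fin 3) ℂ) ^ (m + 1) :=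
      congrArg (fun p => p.2.1) h
    obtain hs | hs := smul_eq_zero.mp h1
    · rw [hs, zero_smul] at h2
      exact hX h2.symm
    · exact hX hs
end

section
/- Let d1, d2 ≥ 1 and define f(x,y,z) = x · ∏_{i=1}^{d1} (x − i y) · ∏_{j=1}^{d2} (x − j z) ∈ ℂ[x,y,z], a product of d = d1 + d2 + 1 distinct linear forms. Then the point (0:0:1) lies on exactly d1 + 1 of these lines and the point (0:1:0) lies on exactly d2 + 1 of these lines, and every other point of ℙ²(ℂ) lies on at most 2 of these lines. -/
open MvPolynomial
open scoped Classical

/-- The number of linear factors of `f = x ∏_{i=1}^{d1}(x - i y) ∏_{j=1}^{d2}(x - j z)`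
vanishing at the vector `v`, i.e. the multiplicity of the corresponding projective point
with respect to this line arrangement. -/
noncomputable def arrMult (d1 d2 : ℕ) (v : Fin 3 → ℂ) : ℕ :=
  (if v 0 = 0 then 1 else 0)
    + ((Finset.range d1).filter (fun i => v 0 = ((i : ℂ) + 1) * v 1)).card
    + ((Finset.range d2).filter (fun j => v 0 = ((j : ℂ) + 1) * v 2)).card

lemma hc_aux : ∀ i : ℕ, ((i : ℂ) + 1) ≠ 0 := by
  intro i hi
  have : ((i : ℂ) + 1) = ((i + 1 : ℕ) : ℂ) := by push_cast; ring
  rw [this] at hi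
  exact_mod_cast hi

lemma bind_eq_image (d : ℕ) :
    (do let a ← Finset.range d; pure ((a : ℂ))) = Finset.image Nat.cast (Finset.range d) := by
  ext x; simp

lemma card_le_one_aux (d : ℕ) (a b : ℂ) (ha : a ≠ 0) :
    ((Finset.range d).filter (fun i => a = ((i : ℂ) + 1) * b)).card ≤ 1 := by
  apply Finset.card_le_one.mpr
  intro i hi j hj
  simp only [Finset.mem_filter] at hi hj
  have hb : b ≠ 0 := by
    rintro rfl
    exact ha (by simpa using hi.2)
  have h : (i + 1) = j + 1 :=
    mul_right_cancel₀ hb (hi.2.symm.trans hj.2)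
  exact add_right_cancel h

theorem stmt_7 (d1 d2 : ℕ) (h1 : 1 ≤ d1) (h2 : 1 ≤ d2) :
    arrMult d1 d2 ![0, 0, 1] = d1 + 1 ∧
    arrMult d1 d2 ![0, 1, 0] = d2 + 1 ∧
    ∀ v : Fin 3 → ℂ, v ≠ 0 →
      (∀ t : ℂ, v ≠ t • ![0, 0, 1]) → (∀ t : ℂ, v ≠ t • ![0, 1, 0]) →
      arrMult d1 d2 v ≤ 2 := by
  have himg : ∀ d : ℕ, (Finset.image (Nat.cast : ℕ → ℂ) (Finset.range d)).card = d := by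
    intro d
    rw [Finset.card_image_of_injective _ Nat.cast_injective, Finset.card_range]
  have hemp : ∀ d : ℕ, ∀ p : ℂ → Prop, (∀ n : ℕ, ¬ p (n : ℂ)) →
      (Finset.image (Nat.cast : ℕ → ℂ) (Finset.range d)).filter p = ∅ := by
    intro d p hp
    rw [Finset.filter_eq_empty_iff]
    intro x hx
    obtain ⟨n, -, rfl⟩ := Finset.mem_image.mp hx
    exact hp n
  refine ⟨?_, ?_, ?_⟩
  · simp only [arrMult, Matrix.cons_val_zero, Matrix.cons_val_one, Matrix.head_cons,
      Matrix.cons_val_two, Matrix.tail_cons, mul_zero, mul_one, if_pos rfl]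
    rw [bind_eq_image d1, bind_eq_image d2]
    rw [Finset.filter_true,
      hemp d2 (fun j => (0 : ℂ) = j + 1) (fun n h => hc_aux n h.symm),
      himg]
    simp [Nat.add_comm]
  · simp only [arrMult, Matrix.cons_val_zero, Matrix.cons_val_one, Matrix.head_cons,
      Matrix.cons_val_two, Matrix.tail_cons, mul_zero, mul_one, if_pos rfl]
    rw [bind_eq_image d1, bind_eq_image d2]
    rw [Finset.filter_true,
      hemp d1 (fun i => (0 : ℂ) = i + 1) (fun n h => hc_aux n h.symm),
      himg]
    simp [Nat.add_comm]
  · intro v hv he3 he2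
    by_cases h0 : v 0 = 0
    · have h1' : v 1 ≠ 0 := by
        intro h1'
        by_cases h2' : v 2 = 0
        · apply hv; funext k; fin_cases k <;> simp [h0, h1', h2']
        · apply he3 (v 2)
          funext k; fin_cases k <;> simp [h0, h1']
      have h2' : v 2 ≠ 0 := by
        intro h2'
        apply he2 (v 1)
        funext k; fin_cases k <;> simp [h0, h2']
      simp only [arrMult, if_pos h0]
      rw [bind_eq_image d1, bind_eq_image d2]
      rw [hemp d1 (fun i => v 0 = (i + 1) * v 1) (by
          intro n h
          rw [h0] at h
          exact (mul_ne_zero (hc_aux n) h1') h.symm),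
        hemp d2 (fun j => v 0 = (j + 1) * v 2) (by
          intro n h
          rw [h0] at h
          exact (mul_ne_zero (hc_aux n) h2') h.symm)]
      simp
    · have c1 := card_le_one_aux d1 (v 0) (v 1) h0
      have c2 := card_le_one_aux d2 (v 0) (v 2) h0
      simp only [arrMult, if_neg h0]
      omega
end
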